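/- Let z be a standard bivariate normal vector and for x ∈ ℝ let u(x) = B(1, x)ᵀ where B is a positive definite symmetric 2×2 matrix. Then for a < b and w > 0, P( for all x ∈ (a,b), |u(x)·z|/‖u(x)‖ < w ) = P( for all u ∈ E(φ), |u·z|/‖u‖ < w ), where φ ∈ (0, π) is the angle between u(a) and u(b) and E(φ) is the open cone of half-angle φ/2 about the positive z₂-axis. -/

import Mathlib

open MeasureTheory ProbabilityTheory Set Real

/-- Dot product on ℝ². -/
def dot2 (u z : ℝ × ℝ) : ℝ := u.1 * z.1 + u.2 * z.2

/-- Euclidean norm on ℝ². -/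
noncomputable def nrm2 (u : ℝ × ℝ) : ℝ := Real.sqrt (u.1 ^ 2 + u.2 ^ 2)

/-- The open cone of half-angle `φ/2` about the positive `z₂`-axis. -/
noncomputable def coneE (φ : ℝ) : Set (ℝ × ℝ) :=
  {u : ℝ × ℝ | u ≠ 0 ∧ u.2 > nrm2 u * Real.cos (φ / 2)}

/-- The vector `u(x) = B (1, x)ᵀ`, as an element of `ℝ × ℝ`. -/
def uvec (B : Matrix (Fin 2) (Fin 2) ℝ) (x : ℝ) : ℝ × ℝ :=
  (B 0 0 + B 0 1 * x, B 1 0 + B 1 1 * x)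

open scoped ENNReal NNReal

lemma nrm2_sq (v : ℝ × ℝ) : nrm2 v ^ 2 = v.1 ^ 2 + v.2 ^ 2 :=
  Real.sq_sqrt (by positivity)

lemma nrm2_nonneg (v : ℝ × ℝ) : 0 ≤ nrm2 v := Real.sqrt_nonneg _

lemma nrm2_pos {v : ℝ × ℝ} (h : v ≠ 0) : 0 < nrm2 v := by
  apply Real.sqrt_pos.2
  rcases eq_or_ne v.1 0 with h1 | h1
  · rcases eq_or_ne v.2 0 with h2 | h2
    · exact absurd (Prod.ext h1 h2) h
    · nlinarith [sq_nonneg v.1, pow_pos (abs_pos.2 h2) 2, sq_abs v.2]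
  · nlinarith [sq_nonneg v.2, pow_pos (abs_pos.2 h1) 2, sq_abs v.1]

lemma nrm2_smul {l : ℝ} (hl : 0 ≤ l) (v : ℝ × ℝ) : nrm2 (l • v) = l * nrm2 v := by
  simp only [nrm2, Prod.smul_fst, Prod.smul_snd, smul_eq_mul]
  rw [show (l * v.1) ^ 2 + (l * v.2) ^ 2 = l ^ 2 * (v.1 ^ 2 + v.2 ^ 2) by ring,
    Real.sqrt_mul (by positivity), Real.sqrt_sq hl]

lemma dot2_smul (l : ℝ) (v z : ℝ × ℝ) : dot2 (l • v) z = l * dot2 v z := by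
  simp only [dot2, Prod.smul_fst, Prod.smul_snd, smul_eq_mul]; ring

set_option maxHeartbeats 1000000 in
/-- Key cone characterization: the open cone spanned by two unit vectors `P`, `Q` making
an angle in `(0, π)` is exactly the set of nonzero vectors whose angle with the unit
bisector is less than half the angle between `P` and `Q`. -/
lemma cone_mem_iff (P Q : ℝ × ℝ) (hP : P.1 ^ 2 + P.2 ^ 2 = 1) (hQ : Q.1 ^ 2 + Q.2 ^ 2 = 1)
    (hc1 : dot2 P Q < 1) (hc2 : -1 < dot2 P Q) (v : ℝ × ℝ) :
    (∃ s t : ℝ, 0 < s ∧ 0 < t ∧ v = s • P + t • Q) ↔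
      v ≠ 0 ∧ nrm2 v * Real.sqrt ((1 + dot2 P Q) / 2)
          < dot2 v ((nrm2 (P + Q))⁻¹ • (P + Q)) := by
  obtain ⟨c, hcd⟩ : ∃ c : ℝ, c = P.1 * Q.1 + P.2 * Q.2 := ⟨_, rfl⟩
  have hcdot : dot2 P Q = c := hcd.symm
  rw [hcdot] at hc1 hc2 ⊢
  obtain ⟨N, hNdef⟩ : ∃ N : ℝ, N = nrm2 (P + Q) := ⟨_, rfl⟩
  rw [← hNdef]
  obtain ⟨k, hkdef⟩ : ∃ k : ℝ, k = Real.sqrt ((1 + c) / 2) := ⟨_, rfl⟩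
  rw [← hkdef]
  have hc0 : 0 < 1 + c := by linarith
  have hN2 : N ^ 2 = 2 + 2 * c := by
    rw [hNdef, nrm2_sq]; simp only [Prod.fst_add, Prod.snd_add]
    linear_combination hP + hQ - 2 * hcd
  have hNpos : 0 < N := by
    rw [hNdef]
    apply Real.sqrt_pos.2
    simp only [Prod.fst_add, Prod.snd_add]
    nlinarith [hP, hQ]
  have hk2 : k ^ 2 = (1 + c) / 2 := by rw [hkdef]; exact Real.sq_sqrt (by linarith)
  have hkpos : 0 < k := by rw [hkdef]; exact Real.sqrt_pos.2 (by linarith)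
  have hNk : N * k = 1 + c := by
    have h : (N * k - (1 + c)) * (N * k + (1 + c)) = 0 := by nlinarith [hN2, hk2]
    rcases mul_eq_zero.1 h with h | h
    · linarith
    · nlinarith [mul_pos hNpos hkpos]
  have hdotM : ∀ u : ℝ × ℝ, dot2 u (N⁻¹ • (P + Q)) = N⁻¹ * dot2 u (P + Q) := by
    intro u; simp only [dot2, Prod.smul_fst, Prod.smul_snd, smul_eq_mul,
      Prod.fst_add, Prod.snd_add]; ring
  have hdotPQ : ∀ u : ℝ × ℝ, dot2 u (P + Q) = u.1 * (P.1 + Q.1) + u.2 * (P.2 + Q.2) := by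
    intro u; simp [dot2]
  constructor
  · rintro ⟨s, t, hs, ht, rfl⟩
    have e1 : (s • P + t • Q).1 = s * P.1 + t * Q.1 := by
      simp [Prod.fst_add, Prod.smul_fst, smul_eq_mul]
    have e2 : (s • P + t • Q).2 = s * P.2 + t * Q.2 := by
      simp [Prod.snd_add, Prod.smul_snd, smul_eq_mul]
    have hnv2 : nrm2 (s • P + t • Q) ^ 2 = s ^ 2 + t ^ 2 + 2 * s * t * c := by
      rw [nrm2_sq, e1, e2]; linear_combination s ^ 2 * hP + t ^ 2 * hQ - 2 * s * t * hcd
    have hvne : (s • P + t • Q) ≠ 0 := by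
      intro h0
      have : (s • P + t • Q).1 = 0 ∧ (s • P + t • Q).2 = 0 := by rw [h0]; exact ⟨rfl, rfl⟩
      have hz : nrm2 (s • P + t • Q) ^ 2 = 0 := by rw [nrm2_sq, this.1, this.2]; ring
      nlinarith [hz, hnv2, mul_pos hs ht, sq_nonneg (s - t)]
    refine ⟨hvne, ?_⟩
    have hlt : nrm2 (s • P + t • Q) < s + t := by
      nlinarith [hnv2, mul_pos hs ht, nrm2_nonneg (s • P + t • Q)]
    have hdot : dot2 (s • P + t • Q) (P + Q) = (s + t) * (1 + c) := by
      rw [hdotPQ, e1, e2]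
      linear_combination s * hP + t * hQ - (s + t) * hcd
    rw [hdotM, hdot]
    have : N⁻¹ * ((s + t) * (1 + c)) = (s + t) * k := by
      field_simp
      linear_combination (-1) * hNk
    rw [this]
    exact mul_lt_mul_of_pos_right hlt hkpos
  · rintro ⟨hv0, hvM⟩
    obtain ⟨d, hd⟩ : ∃ d : ℝ, d = P.1 * Q.2 - P.2 * Q.1 := ⟨_, rfl⟩
    have hd2 : d ^ 2 = 1 - c ^ 2 := by
      have : d ^ 2 + c ^ 2 = (P.1 ^ 2 + P.2 ^ 2) * (Q.1 ^ 2 + Q.2 ^ 2) := by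
        rw [hd, hcd]; ring
      rw [hP, hQ] at this; linarith
    have hd0 : d ≠ 0 := by
      intro h; rw [h] at hd2; nlinarith
    obtain ⟨s, hsdef⟩ : ∃ s : ℝ, s = (v.1 * Q.2 - v.2 * Q.1) / d := ⟨_, rfl⟩
    obtain ⟨t, htdef⟩ : ∃ t : ℝ, t = (P.1 * v.2 - P.2 * v.1) / d := ⟨_, rfl⟩
    have e1 : v.1 = s * P.1 + t * Q.1 := by
      rw [hsdef, htdef]; field_simp [hd0]; rw [hd]; ring
    have e2 : v.2 = s * P.2 + t * Q.2 := by
      rw [hsdef, htdef]; field_simp [hd0]; rw [hd]; ring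
    have hveq : v = s • P + t • Q := by
      refine Prod.ext ?_ ?_
      · simpa [Prod.fst_add, Prod.smul_fst, smul_eq_mul] using e1
      · simpa [Prod.snd_add, Prod.smul_snd, smul_eq_mul] using e2
    have hnv2 : nrm2 v ^ 2 = s ^ 2 + t ^ 2 + 2 * s * t * c := by
      rw [nrm2_sq, e1, e2]; linear_combination s ^ 2 * hP + t ^ 2 * hQ - 2 * s * t * hcd
    have hdot : dot2 v (P + Q) = (s + t) * (1 + c) := by
      rw [hdotPQ, e1, e2]; linear_combination s * hP + t * hQ - (s + t) * hcd
    rw [hdotM, hdot] at hvM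
    have hkey : N⁻¹ * ((s + t) * (1 + c)) = (s + t) * k := by
      field_simp; linear_combination (-(s + t)) * hNk
    rw [hkey] at hvM
    have hst_gt : nrm2 v < s + t := lt_of_mul_lt_mul_right (by linarith [hvM]) hkpos.le
    have hnv_nonneg := nrm2_nonneg v
    have hstpos : 0 < s + t := lt_of_le_of_lt hnv_nonneg hst_gt
    have hprod_pos : 0 < s * t := by nlinarith [hnv2, hst_gt, hnv_nonneg, hc1]
    have hs : 0 < s := by
      by_contra h
      push_neg at h
      have hs' : s < 0 := lt_of_le_of_ne h (by rintro rfl; simp at hprod_pos)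
      have ht' : t < 0 := by nlinarith
      linarith
    have ht : 0 < t := by nlinarith
    exact ⟨s, t, hs, ht, hveq⟩

lemma gpdfr_mul (x y u t : ℝ) (h : x^2+y^2 = u^2+t^2) :
    gaussianPDFReal 0 1 x * gaussianPDFReal 0 1 y
      = gaussianPDFReal 0 1 u * gaussianPDFReal 0 1 t := by
  simp only [gaussianPDFReal, sub_zero, NNReal.coe_one, mul_one]
  rw [mul_mul_mul_comm, ← Real.exp_add, mul_mul_mul_comm, ← Real.exp_add]
  congr 2
  linear_combination (-1/2 : ℝ) * h

lemma gauss_prod_eq : ((gaussianReal 0 1).prod (gaussianReal 0 1)) =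
    (volume : Measure (ℝ × ℝ)).withDensity
      (fun z : ℝ × ℝ => gaussianPDF 0 1 z.1 * gaussianPDF 0 1 z.2) := by
  refine Measure.prod_eq fun s t hs ht => ?_
  rw [withDensity_apply _ (hs.prod ht), Measure.volume_eq_prod, ← Measure.prod_restrict,
    lintegral_prod_mul (measurable_gaussianPDF 0 1).aemeasurable
      (measurable_gaussianPDF 0 1).aemeasurable,
    gaussianReal_apply 0 one_ne_zero s, gaussianReal_apply 0 one_ne_zero t]

/-- Rotation invariance of the standard bivariate normal distribution. -/
lemma gauss_rot (Sn Co : ℝ) (h1 : Sn^2 + Co^2 = 1) (A : Set (ℝ × ℝ)) :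
    ((gaussianReal 0 1).prod (gaussianReal 0 1))
      ((fun z : ℝ × ℝ => (Co * z.1 - Sn * z.2, Sn * z.1 + Co * z.2)) ⁻¹' A) =
    ((gaussianReal 0 1).prod (gaussianReal 0 1)) A := by
  set F : ℝ × ℝ → ℝ≥0∞ := fun z => gaussianPDF 0 1 z.1 * gaussianPDF 0 1 z.2 with hF
  have hFm : Measurable F := by
    exact ((measurable_gaussianPDF 0 1).comp measurable_fst).mul
      ((measurable_gaussianPDF 0 1).comp measurable_snd)
  have hdet : LinearMap.det (Matrix.toLin (Module.Basis.finTwoProd ℝ) (Module.Basis.finTwoProd ℝ)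
      !![Co, -Sn; Sn, Co]) = 1 := by
    rw [LinearMap.det_toLin, Matrix.det_fin_two_of]
    linear_combination h1
  have hmap0 := Measure.map_linearMap_addHaar_eq_smul_addHaar (volume : Measure (ℝ × ℝ))
      (f := Matrix.toLin (Module.Basis.finTwoProd ℝ) (Module.Basis.finTwoProd ℝ) !![Co, -Sn; Sn, Co])
      (by rw [hdet]; norm_num)
  rw [hdet] at hmap0
  simp only [inv_one, abs_one, ENNReal.ofReal_one, one_smul] at hmap0
  have hfun : ⇑(Matrix.toLin (Module.Basis.finTwoProd ℝ) (Module.Basis.finTwoProd ℝ) !![Co, -Sn; Sn, Co])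
      = fun z : ℝ × ℝ => (Co * z.1 - Sn * z.2, Sn * z.1 + Co * z.2) := by
    funext z
    rw [Matrix.toLin_finTwoProd_apply]
    exact Prod.ext (by ring) (by ring)
  rw [hfun] at hmap0
  let e : (ℝ × ℝ) ≃ᵐ (ℝ × ℝ) :=
    { toEquiv :=
      { toFun := fun z : ℝ × ℝ => (Co * z.1 - Sn * z.2, Sn * z.1 + Co * z.2)
        invFun := fun z : ℝ × ℝ => (Co * z.1 + Sn * z.2, -Sn * z.1 + Co * z.2)
        left_inv := by
          intro z
          exact Prod.ext (by simp only; linear_combination z.1 * h1)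
            (by simp only; linear_combination z.2 * h1)
        right_inv := by
          intro z
          exact Prod.ext (by simp only; linear_combination z.1 * h1)
            (by simp only; linear_combination z.2 * h1) }
      measurable_toFun := by
        show Measurable fun z : ℝ × ℝ => (Co * z.1 - Sn * z.2, Sn * z.1 + Co * z.2)
        fun_prop
      measurable_invFun := by
        show Measurable fun z : ℝ × ℝ => (Co * z.1 + Sn * z.2, -Sn * z.1 + Co * z.2)
        fun_prop }
  have hFR : ∀ z : ℝ × ℝ, F (e z) = F z := by
    intro z
    show gaussianPDF 0 1 (Co * z.1 - Sn * z.2) * gaussianPDF 0 1 (Sn * z.1 + Co * z.2)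
      = gaussianPDF 0 1 z.1 * gaussianPDF 0 1 z.2
    simp only [gaussianPDF]
    rw [← ENNReal.ofReal_mul (gaussianPDFReal_nonneg _ _ _),
      ← ENNReal.ofReal_mul (gaussianPDFReal_nonneg _ _ _)]
    congr 1
    exact gpdfr_mul _ _ _ _ (by linear_combination (z.1^2 + z.2^2) * h1)
  have hmape : Measure.map e (volume : Measure (ℝ × ℝ)) = volume := hmap0
  rw [gauss_prod_eq, ← hF]
  rw [withDensity_apply' F, withDensity_apply' F]
  have hres : (volume : Measure (ℝ × ℝ)).restrict A
      = Measure.map e ((volume : Measure (ℝ × ℝ)).restrict (e ⁻¹' A)) := by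
    conv_lhs => rw [← hmape]
    exact MeasurableEquiv.restrict_map e _ A
  rw [hres, lintegral_map hFm e.measurable]
  exact lintegral_congr fun z => (hFR z).symm ▸ rfl

lemma comb_mem (B : Matrix (Fin 2) (Fin 2) ℝ) (a b : ℝ) (hab : a < b) (s t : ℝ)
    (hs : 0 < s) (ht : 0 < t) :
    ∃ l x : ℝ, 0 < l ∧ x ∈ Set.Ioo a b ∧ s • uvec B a + t • uvec B b = l • uvec B x := by
  refine ⟨s + t, (s * a + t * b) / (s + t), by linarith, ⟨?_, ?_⟩, ?_⟩
  · rw [lt_div_iff₀ (by linarith)]; nlinarith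
  · rw [div_lt_iff₀ (by linarith)]; nlinarith
  · refine Prod.ext ?_ ?_ <;>
    · simp only [uvec, Prod.fst_add, Prod.snd_add, Prod.smul_fst, Prod.smul_snd, smul_eq_mul]
      field_simp
      ring

lemma split_mem (B : Matrix (Fin 2) (Fin 2) ℝ) (a b l x : ℝ) (hab : a < b) (hl : 0 < l)
    (hx : x ∈ Set.Ioo a b) :
    ∃ s t : ℝ, 0 < s ∧ 0 < t ∧ l • uvec B x = s • uvec B a + t • uvec B b := by
  obtain ⟨hx1, hx2⟩ := hx
  refine ⟨l * (b - x) / (b - a), l * (x - a) / (b - a),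
    div_pos (mul_pos hl (by linarith)) (by linarith),
    div_pos (mul_pos hl (by linarith)) (by linarith), ?_⟩
  refine Prod.ext ?_ ?_ <;>
  · simp only [uvec, Prod.fst_add, Prod.snd_add, Prod.smul_fst, Prod.smul_snd, smul_eq_mul]
    have hba : b - a ≠ 0 := by linarith
    field_simp
    ring

/-- Let `z` be a standard bivariate normal vector and for `x ∈ ℝ` let `u(x) = B(1, x)ᵀ` where
`B` is a positive definite symmetric 2×2 matrix. Then for `a < b` and `w > 0`,
`P( ∀ x ∈ (a,b), |u(x)·z|/‖u(x)‖ < w ) = P( ∀ u ∈ E(φ), |u·z|/‖u‖ < w )`, where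
`φ = arccos( u(a)·u(b) / (‖u(a)‖‖u(b)‖) ) ∈ (0, π)` is the angle between `u(a)` and `u(b)`
and `E(φ)` is the open cone of half-angle `φ/2` about the positive `z₂`-axis. -/
theorem restricted_band_probability_eq_cone_probability
    (B : Matrix (Fin 2) (Fin 2) ℝ) (hB : B.PosDef) (hBsymm : B.transpose = B)
    (a b w : ℝ) (hab : a < b) (hw : 0 < w)
    (φ : ℝ)
    (hφdef : φ = Real.arccos (dot2 (uvec B a) (uvec B b) / (nrm2 (uvec B a) * nrm2 (uvec B b))))
    (hφ : φ ∈ Set.Ioo 0 π) :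
    ((gaussianReal 0 1).prod (gaussianReal 0 1))
        {z : ℝ × ℝ | ∀ x ∈ Set.Ioo a b, |dot2 (uvec B x) z| / nrm2 (uvec B x) < w} =
      ((gaussianReal 0 1).prod (gaussianReal 0 1))
        {z : ℝ × ℝ | ∀ u ∈ coneE φ, |dot2 u z| / nrm2 u < w} := by
  obtain ⟨hφ1, hφ2⟩ := hφ
  -- Nondegeneracy of `uvec`
  have hdetB : B 0 0 * B 1 1 - B 0 1 * B 1 0 ≠ 0 := by
    have h := hB.det_pos
    rw [Matrix.det_fin_two] at h
    exact ne_of_gt h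
  have hu0 : ∀ x : ℝ, uvec B x ≠ 0 := by
    intro x h
    have h1 : (uvec B x).1 = 0 := by rw [h]; rfl
    have h2 : (uvec B x).2 = 0 := by rw [h]; rfl
    simp only [uvec] at h1 h2
    exact hdetB (by linear_combination B 1 1 * h1 - B 0 1 * h2)
  have hnu : ∀ x : ℝ, 0 < nrm2 (uvec B x) := fun x => nrm2_pos (hu0 x)
  have hna := hnu a
  have hnb := hnu b
  -- The cosine of the angle between `u(a)` and `u(b)`
  obtain ⟨c, hc⟩ : ∃ c : ℝ,
      c = dot2 (uvec B a) (uvec B b) / (nrm2 (uvec B a) * nrm2 (uvec B b)) := ⟨_, rfl⟩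
  rw [← hc] at hφdef
  have hCS : dot2 (uvec B a) (uvec B b) ^ 2 ≤ (nrm2 (uvec B a) * nrm2 (uvec B b)) ^ 2 := by
    rw [mul_pow, nrm2_sq, nrm2_sq]
    simp only [dot2]
    nlinarith [sq_nonneg ((uvec B a).1 * (uvec B b).2 - (uvec B a).2 * (uvec B b).1)]
  have hcsq : c ^ 2 ≤ 1 := by
    rw [hc, div_pow]
    exact div_le_one_of_le₀ hCS (by positivity)
  have hcm : -1 ≤ c := by nlinarith
  have hcM : c ≤ 1 := by nlinarith
  have hcosφ : Real.cos φ = c := by rw [hφdef]; exact Real.cos_arccos hcm hcM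
  have hc1 : c < 1 := by
    rw [← hcosφ]
    have h := Real.cos_lt_cos_of_nonneg_of_le_pi (le_refl 0) hφ2.le hφ1
    rwa [Real.cos_zero] at h
  have hc2 : -1 < c := by
    rw [← hcosφ]
    have h := Real.cos_lt_cos_of_nonneg_of_le_pi hφ1.le (le_refl π) hφ2
    rwa [Real.cos_pi] at h
  -- Half-angle formula
  have hkhalf : Real.cos (φ / 2) = Real.sqrt ((1 + c) / 2) := by
    have h2 : Real.cos (φ / 2) ^ 2 = (1 + c) / 2 := by
      have h := Real.cos_sq (φ / 2)
      rw [show 2 * (φ / 2) = φ by ring, hcosφ] at h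
      linarith
    have hnn : 0 ≤ Real.cos (φ / 2) :=
      Real.cos_nonneg_of_mem_Icc ⟨by linarith [Real.pi_pos], by linarith⟩
    rw [← h2, Real.sqrt_sq hnn]
  -- Normalized direction vectors
  obtain ⟨P, hPdef⟩ : ∃ P : ℝ × ℝ, P = (nrm2 (uvec B a))⁻¹ • uvec B a := ⟨_, rfl⟩
  obtain ⟨Q, hQdef⟩ : ∃ Q : ℝ × ℝ, Q = (nrm2 (uvec B b))⁻¹ • uvec B b := ⟨_, rfl⟩
  have hP1 : P.1 ^ 2 + P.2 ^ 2 = 1 := by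
    rw [hPdef]
    simp only [Prod.smul_fst, Prod.smul_snd, smul_eq_mul]
    have h := nrm2_sq (uvec B a)
    field_simp [hna.ne']
    linarith
  have hQ1 : Q.1 ^ 2 + Q.2 ^ 2 = 1 := by
    rw [hQdef]
    simp only [Prod.smul_fst, Prod.smul_snd, smul_eq_mul]
    have h := nrm2_sq (uvec B b)
    field_simp [hnb.ne']
    linarith
  have hPQc : dot2 P Q = c := by
    rw [hPdef, hQdef, hc]
    simp only [dot2, Prod.smul_fst, Prod.smul_snd, smul_eq_mul]
    field_simp [hna.ne', hnb.ne']
  have hPQc' : P.1 * Q.1 + P.2 * Q.2 = c := hPQc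
  -- The bisector direction
  have hPQne : P + Q ≠ 0 := by
    intro h
    have h1 : (P + Q).1 = 0 := by rw [h]; rfl
    have h2 : (P + Q).2 = 0 := by rw [h]; rfl
    simp only [Prod.fst_add, Prod.snd_add] at h1 h2
    have hq1 : Q.1 = -P.1 := by linarith
    have hq2 : Q.2 = -P.2 := by linarith
    rw [hq1, hq2] at hPQc'
    nlinarith [hP1, hc2]
  have hNpos : 0 < nrm2 (P + Q) := nrm2_pos hPQne
  obtain ⟨Sn, hSn⟩ : ∃ x : ℝ, x = (nrm2 (P + Q))⁻¹ * (P.1 + Q.1) := ⟨_, rfl⟩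
  obtain ⟨Co, hCo⟩ : ∃ x : ℝ, x = (nrm2 (P + Q))⁻¹ * (P.2 + Q.2) := ⟨_, rfl⟩
  have hSC : Sn ^ 2 + Co ^ 2 = 1 := by
    rw [hSn, hCo]
    have h := nrm2_sq (P + Q)
    simp only [Prod.fst_add, Prod.snd_add] at h
    field_simp [hNpos.ne']
    linarith
  -- Dot products with the bisector after applying the transposed rotation
  have hMdotRt : ∀ u : ℝ × ℝ, dot2 (Co * u.1 + Sn * u.2, -Sn * u.1 + Co * u.2)
      ((nrm2 (P + Q))⁻¹ • (P + Q)) = u.2 := by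
    intro u
    simp only [dot2, Prod.smul_fst, Prod.smul_snd, smul_eq_mul, Prod.fst_add, Prod.snd_add]
    rw [← hSn, ← hCo]
    linear_combination u.2 * hSC
  have hnrmRt : ∀ u : ℝ × ℝ, nrm2 ((Co * u.1 + Sn * u.2, -Sn * u.1 + Co * u.2) : ℝ × ℝ)
      = nrm2 u := by
    intro u
    simp only [nrm2]
    congr 1
    linear_combination (u.1 ^ 2 + u.2 ^ 2) * hSC
  have hRtne : ∀ u : ℝ × ℝ, u ≠ 0 →
      ((Co * u.1 + Sn * u.2, -Sn * u.1 + Co * u.2) : ℝ × ℝ) ≠ 0 := by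
    intro u hu h
    have h1 : Co * u.1 + Sn * u.2 = 0 := congrArg Prod.fst h
    have h2 : -Sn * u.1 + Co * u.2 = 0 := congrArg Prod.snd h
    apply hu
    refine Prod.ext ?_ ?_
    · show u.1 = 0
      linear_combination Co * h1 - Sn * h2 - u.1 * hSC
    · show u.2 = 0
      linear_combination Sn * h1 + Co * h2 - u.2 * hSC
  have hRtRf : ∀ v : ℝ × ℝ,
      ((Co * (Co * v.1 - Sn * v.2) + Sn * (Sn * v.1 + Co * v.2),
        -Sn * (Co * v.1 - Sn * v.2) + Co * (Sn * v.1 + Co * v.2)) : ℝ × ℝ) = v := by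
    intro v
    refine Prod.ext ?_ ?_
    · show _ = v.1
      linear_combination v.1 * hSC
    · show _ = v.2
      linear_combination v.2 * hSC
  -- Membership in the cone `E(φ)` corresponds to the rotated open cone spanned by `P` and `Q`
  have hconeEiff : ∀ u : ℝ × ℝ, u ∈ coneE φ ↔
      ∃ s t : ℝ, 0 < s ∧ 0 < t ∧
        ((Co * u.1 + Sn * u.2, -Sn * u.1 + Co * u.2) : ℝ × ℝ) = s • P + t • Q := by
    intro u
    rw [cone_mem_iff P Q hP1 hQ1 (by rw [hPQc]; exact hc1) (by rw [hPQc]; exact hc2),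
      hMdotRt, hnrmRt, hPQc]
    simp only [coneE, Set.mem_setOf_eq]
    rw [hkhalf]
    constructor
    · rintro ⟨h0, hgt⟩
      exact ⟨hRtne u h0, hgt⟩
    · rintro ⟨h0, hgt⟩
      refine ⟨?_, hgt⟩
      intro h
      apply h0
      rw [h]
      refine Prod.ext ?_ ?_ <;> simp
  -- Positive combinations of `P` and `Q` are exactly positive multiples of the `uvec`s
  have hcombP : ∀ s t : ℝ, s • P + t • Q
      = (s * (nrm2 (uvec B a))⁻¹) • uvec B a + (t * (nrm2 (uvec B b))⁻¹) • uvec B b := by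
    intro s t
    rw [hPdef, hQdef, smul_smul, smul_smul]
  have hIoo : ∀ v : ℝ × ℝ, (∃ s t : ℝ, 0 < s ∧ 0 < t ∧ v = s • P + t • Q) ↔
      (∃ l x : ℝ, 0 < l ∧ x ∈ Set.Ioo a b ∧ v = l • uvec B x) := by
    intro v
    constructor
    · rintro ⟨s, t, hs, ht, rfl⟩
      rw [hcombP]
      obtain ⟨l, x, hl, hx, heq⟩ := comb_mem B a b hab _ _
        (mul_pos hs (inv_pos.2 hna)) (mul_pos ht (inv_pos.2 hnb))
      exact ⟨l, x, hl, hx, heq⟩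
    · rintro ⟨l, x, hl, hx, rfl⟩
      obtain ⟨s, t, hs, ht, heq⟩ := split_mem B a b l x hab hl hx
      refine ⟨s * nrm2 (uvec B a), t * nrm2 (uvec B b),
        mul_pos hs hna, mul_pos ht hnb, ?_⟩
      rw [hcombP, mul_assoc, mul_assoc, mul_inv_cancel₀ hna.ne', mul_inv_cancel₀ hnb.ne',
        mul_one, mul_one, heq]
  -- Scale invariance of the band condition
  have hcond : ∀ (l : ℝ) (v z : ℝ × ℝ), 0 < l →
      (|dot2 (l • v) z| < w * nrm2 (l • v) ↔ |dot2 v z| < w * nrm2 v) := by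
    intro l v z hl
    rw [dot2_smul, nrm2_smul hl.le, abs_mul, abs_of_pos hl,
      show w * (l * nrm2 v) = l * (w * nrm2 v) by ring]
    exact mul_lt_mul_iff_right₀ hl
  -- The two events agree after rotating by the bisector angle
  have hsets : {z : ℝ × ℝ | ∀ x ∈ Set.Ioo a b, |dot2 (uvec B x) z| / nrm2 (uvec B x) < w}
      = (fun z : ℝ × ℝ => (Co * z.1 - Sn * z.2, Sn * z.1 + Co * z.2)) ⁻¹'
        {z : ℝ × ℝ | ∀ u ∈ coneE φ, |dot2 u z| / nrm2 u < w} := by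
    ext z
    simp only [Set.mem_setOf_eq, Set.mem_preimage]
    constructor
    · intro hz u hu
      have hu0 : u ≠ 0 := hu.1
      rw [div_lt_iff₀ (nrm2_pos hu0)]
      have hdoteq : dot2 u (Co * z.1 - Sn * z.2, Sn * z.1 + Co * z.2)
          = dot2 ((Co * u.1 + Sn * u.2, -Sn * u.1 + Co * u.2) : ℝ × ℝ) z := by
        simp only [dot2]
        ring
      obtain ⟨s, t, hs, ht, heq⟩ := (hconeEiff u).1 hu
      obtain ⟨l, x, hl, hx, heql⟩ := (hIoo _).1 ⟨s, t, hs, ht, heq⟩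
      have hzx := hz x hx
      rw [div_lt_iff₀ (hnu x)] at hzx
      have : |dot2 ((Co * u.1 + Sn * u.2, -Sn * u.1 + Co * u.2) : ℝ × ℝ) z|
          < w * nrm2 ((Co * u.1 + Sn * u.2, -Sn * u.1 + Co * u.2) : ℝ × ℝ) := by
        rw [heql]
        exact (hcond l _ z hl).2 hzx
      rw [hdoteq, ← hnrmRt u]
      exact this
    · intro hz x hx
      rw [div_lt_iff₀ (hnu x)]
      obtain ⟨s, t, hs, ht, heq⟩ := (hIoo (uvec B x)).2 ⟨1, x, one_pos, hx, (one_smul _ _).symm⟩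
      have huc : ((Co * (uvec B x).1 - Sn * (uvec B x).2,
          Sn * (uvec B x).1 + Co * (uvec B x).2) : ℝ × ℝ) ∈ coneE φ := by
        rw [hconeEiff]
        refine ⟨s, t, hs, ht, ?_⟩
        simp only
        rw [show ((Co * (Co * (uvec B x).1 - Sn * (uvec B x).2)
            + Sn * (Sn * (uvec B x).1 + Co * (uvec B x).2),
            -Sn * (Co * (uvec B x).1 - Sn * (uvec B x).2)
            + Co * (Sn * (uvec B x).1 + Co * (uvec B x).2)) : ℝ × ℝ) = uvec B x from hRtRf _]
        exact heq
      have hzu := hz _ huc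
      rw [div_lt_iff₀ (nrm2_pos huc.1)] at hzu
      have hdoteq : dot2 ((Co * (uvec B x).1 - Sn * (uvec B x).2,
            Sn * (uvec B x).1 + Co * (uvec B x).2) : ℝ × ℝ)
            (Co * z.1 - Sn * z.2, Sn * z.1 + Co * z.2)
          = dot2 (uvec B x) z := by
        simp only [dot2]
        linear_combination ((uvec B x).1 * z.1 + (uvec B x).2 * z.2) * hSC
      have hnrmeq : nrm2 ((Co * (uvec B x).1 - Sn * (uvec B x).2,
            Sn * (uvec B x).1 + Co * (uvec B x).2) : ℝ × ℝ) = nrm2 (uvec B x) := by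
        simp only [nrm2]
        congr 1
        linear_combination ((uvec B x).1 ^ 2 + (uvec B x).2 ^ 2) * hSC
      rw [hdoteq, hnrmeq] at hzu
      exact hzu
  rw [hsets]
  exact gauss_rot Sn Co hSC _
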